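/- arXiv:1810.12734 — 6 statements merged into one kernel-verified Lean document; each statement's English description precedes it below -/
import Mathlib

section
/- For t ≥ 5 and n ≥ t, there is no Berge-S_t saturated hypergraph on n vertices with exactly t - 2 hyperedges; i.e., sat(n, B(S_t)) ≥ t - 1. -/
open Finset

/-- A hypergraph `H` on `[n]` contains a Berge-`S_t` subhypergraph (`S_t` is the star on `t`
vertices): there are `t - 1` distinct hyperedges `E k` of `H` and distinct vertices
`c, v 1, …, v (t-1)` with `{c, v k} ⊆ E k` for every `k`. -/
def HasBergeStar (t n : ℕ) (H : Finset (Finset (Fin n))) : Prop :=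
  ∃ (E : Fin (t - 1) → Finset (Fin n)) (c : Fin n) (v : Fin (t - 1) → Fin n),
    Function.Injective E ∧ Function.Injective v ∧ (∀ k, v k ≠ c) ∧
      ∀ k, E k ∈ H ∧ c ∈ E k ∧ v k ∈ E k

/-- `H` (with all hyperedges of size at least 2) is Berge-`S_t` saturated: it contains no
Berge-`S_t` subhypergraph, but adding any new hyperedge of size at least 2 creates one. -/
def StarSat (t n : ℕ) (H : Finset (Finset (Fin n))) : Prop :=
  (∀ e ∈ H, 2 ≤ e.card) ∧ ¬ HasBergeStar t n H ∧
    ∀ e : Finset (Fin n), e ∉ H → 2 ≤ e.card → HasBergeStar t n (insert e H)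

/-- The hypergraph `H_t(n)` on `[n]` with hyperedges `[n]`, `[n] \ {i}` for `i ∈ [t-3]`,
and `[t-3]`. -/
def Ht (t n : ℕ) : Finset (Finset (Fin n)) :=
  insert (Finset.univ.filter (fun i : Fin n => (i : ℕ) < t - 3))
    (insert Finset.univ
      ((Finset.univ.filter (fun i : Fin n => (i : ℕ) < t - 3)).image
        (fun i => Finset.univ.erase i)))

lemma aux_choose_gt (t n : ℕ) (ht : 5 ≤ t) (hn : t ≤ n) : t - 2 < n.choose 2 := by
  rw [Nat.choose_two_right]
  have h4 : 4 * (n - 1) ≤ n * (n - 1) := Nat.mul_le_mul_right _ (by omega)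
  have h2 : 2 * (n - 1) ≤ n * (n - 1) / 2 := by
    rw [Nat.le_div_iff_mul_le (by norm_num)]
    omega
  omega

lemma aux_exists_new_pair {n : ℕ} (H : Finset (Finset (Fin n)))
    (h : H.card < n.choose 2) : ∃ e : Finset (Fin n), e.card = 2 ∧ e ∉ H := by
  by_contra h'
  push_neg at h'
  have hsub : (Finset.univ : Finset (Fin n)).powersetCard 2 ⊆ H := by
    intro e he
    exact h' e (Finset.mem_powersetCard.mp he).2
  have := Finset.card_le_card hsub
  rw [Finset.card_powersetCard, Finset.card_univ, Fintype.card_fin] at this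
  omega

lemma aux_center (t n : ℕ) (G : Finset (Finset (Fin n))) (hG : G.card = t - 1)
    (h : HasBergeStar t n G) : ∃ c : Fin n, ∀ A ∈ G, c ∈ A := by
  obtain ⟨E, c, v, hE, hv, hvc, hk⟩ := h
  refine ⟨c, fun A hA => ?_⟩
  have himg : Finset.univ.image E ⊆ G := by
    intro x hx
    obtain ⟨k, -, rfl⟩ := Finset.mem_image.mp hx
    exact (hk k).1
  have hcard : (Finset.univ.image E).card = t - 1 := by
    rw [Finset.card_image_of_injective _ hE, Finset.card_univ, Fintype.card_fin]
  have heq : Finset.univ.image E = G :=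
    Finset.eq_of_subset_of_card_le himg (by omega)
  obtain ⟨k, -, hkA⟩ := Finset.mem_image.mp (heq ▸ hA)
  exact hkA ▸ (hk k).2.1

lemma aux_key (t n : ℕ) (H : Finset (Finset (Fin n))) (hs : StarSat t n H)
    (hcard : H.card = t - 2) (ht : 5 ≤ t) (e : Finset (Fin n)) (he : e ∉ H)
    (he2 : 2 ≤ e.card) : ∃ c : Fin n, c ∈ e ∧ ∀ A ∈ H, c ∈ A := by
  have hB := hs.2.2 e he he2
  have hins : (insert e H).card = t - 1 := by
    rw [Finset.card_insert_of_notMem he]; omega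
  obtain ⟨c, hc⟩ := aux_center t n _ hins hB
  exact ⟨c, hc e (Finset.mem_insert_self e H), fun A hA => hc A (Finset.mem_insert_of_mem hA)⟩

/-- For `t ≥ 5` and `n ≥ t`, there is no Berge-`S_t` saturated hypergraph on `n` vertices with
exactly `t - 2` hyperedges; i.e. `sat(n, B(S_t)) ≥ t - 1`. -/
theorem no_starSat_card_sub_two (t n : ℕ) (ht : 5 ≤ t) (hn : t ≤ n) :
    (¬ ∃ H : Finset (Finset (Fin n)), StarSat t n H ∧ H.card = t - 2) ∧
    (∀ H : Finset (Finset (Fin n)), StarSat t n H → t - 1 ≤ H.card) := by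
  have main : ∀ H : Finset (Finset (Fin n)), StarSat t n H → t - 1 ≤ H.card := by
    intro H hs
    by_contra hlt
    push_neg at hlt
    rcases eq_or_lt_of_le (Nat.le_of_lt_succ (by omega : H.card < (t - 2) + 1))
      with h1 | h1'
    · -- H.card = t - 2
      by_cases hS : ∃ s : Fin n, ∀ A ∈ H, s ∈ A
      · obtain ⟨s, hsA⟩ := hS
        set S : Finset (Fin n) := Finset.univ.filter (fun x => ∀ A ∈ H, x ∈ A) with hSdef
        have hsS : s ∈ S := Finset.mem_filter.mpr ⟨Finset.mem_univ s, hsA⟩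
        have hxy : ∃ x y : Fin n, x ≠ y ∧ x ∉ S ∧ y ∉ S := by
          by_contra hc
          push_neg at hc
          have h1' : Sᶜ.card ≤ 1 := by
            by_contra h2
            push_neg at h2
            obtain ⟨a, ha, b, hb, hab⟩ := Finset.one_lt_card.mp h2
            exact (Finset.mem_compl.mp hb) (hc a b hab (Finset.mem_compl.mp ha))
          have himg : H.image compl ⊆ Sᶜ.powerset := by
            intro B hB
            obtain ⟨A, hA, rfl⟩ := Finset.mem_image.mp hB
            refine Finset.mem_powerset.mpr (compl_subset_compl.mpr ?_)
            intro x hx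
            exact (Finset.mem_filter.mp hx).2 A hA
          have hcard1 : (H.image compl).card = H.card :=
            Finset.card_image_of_injective _ compl_injective
          have := Finset.card_le_card himg
          rw [hcard1, Finset.card_powerset] at this
          have h2pow : 2 ^ Sᶜ.card ≤ 2 ^ 1 := Nat.pow_le_pow_right (by norm_num) h1'
          omega
        obtain ⟨x, y, hxyne, hxS, hyS⟩ := hxy
        have hmemS : ∀ z : Fin n, (∀ A ∈ H, z ∈ A) → z ∈ S := by
          intro z hz; exact Finset.mem_filter.mpr ⟨Finset.mem_univ z, hz⟩
        have heH : ({x, y} : Finset (Fin n)) ∉ H := by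
          intro hmem
          have := hsA _ hmem
          rcases Finset.mem_insert.mp this with rfl | h
          · exact hxS hsS
          · rcases Finset.mem_singleton.mp h with rfl
            exact hyS hsS
        obtain ⟨c, hce, hcA⟩ := aux_key t n H hs h1 ht {x, y} heH
          (by rw [Finset.card_pair hxyne])
        have hcS : c ∈ S := hmemS c hcA
        rcases Finset.mem_insert.mp hce with rfl | h
        · exact hxS hcS
        · rcases Finset.mem_singleton.mp h with rfl
          exact hyS hcS
      · obtain ⟨e, he2, heH⟩ := aux_exists_new_pair H
          (by rw [h1]; exact aux_choose_gt t n ht hn)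
        obtain ⟨c, -, hcA⟩ := aux_key t n H hs h1 ht e heH (by omega)
        exact hS ⟨c, hcA⟩
    · -- H.card < t - 2
      obtain ⟨e, he2, heH⟩ := aux_exists_new_pair H
        (lt_trans h1' (aux_choose_gt t n ht hn))
      obtain ⟨E, c, v, hE, hv, hvc, hk⟩ := hs.2.2 e heH (by omega)
      have himg : Finset.univ.image E ⊆ insert e H := by
        intro x hx
        obtain ⟨k, -, rfl⟩ := Finset.mem_image.mp hx
        exact (hk k).1
      have hcard : (Finset.univ.image E).card = t - 1 := by
        rw [Finset.card_image_of_injective _ hE, Finset.card_univ, Fintype.card_fin]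
      have h2 := Finset.card_le_card himg
      have h3 := Finset.card_insert_le e H
      omega
  exact ⟨fun ⟨H, hs, hcard⟩ => by have := main H hs; omega, main⟩
end

section
/- For t ≥ 5 and n ≥ t, the hypergraph H_t(n) on vertex set [n] with hyperedge set {[n], [n]\{1}, [n]\{2}, ..., [n]\{t-3}, [t-3]} is Berge-S_t saturated; in particular sat(n, B(S_t)) ≤ t - 1. -/
open Finset

def Aset (t n : ℕ) : Finset (Fin n) := Finset.univ.filter (fun i : Fin n => (i : ℕ) < t - 3)

lemma mem_Ht {t n : ℕ} {X : Finset (Fin n)} :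
    X ∈ Ht t n ↔ X = Aset t n ∨ X = Finset.univ ∨
      ∃ i : Fin n, (i : ℕ) < t - 3 ∧ X = Finset.univ.erase i := by
  simp only [Ht, Aset, mem_insert, mem_image, mem_filter, mem_univ, true_and]
  constructor
  · rintro (h | h | ⟨i, hi, rfl⟩)
    · exact Or.inl h
    · exact Or.inr (Or.inl h)
    · exact Or.inr (Or.inr ⟨i, hi, rfl⟩)
  · rintro (h | h | ⟨i, hi, rfl⟩)
    · exact Or.inl h
    · exact Or.inr (Or.inl h)
    · exact Or.inr (Or.inr ⟨i, hi, rfl⟩)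

lemma card_Aset {t n : ℕ} (h : t - 3 ≤ n) : (Aset t n).card = t - 3 := by
  have h' : ∀ m ∈ Finset.range (t - 3), m < n := fun m hm => lt_of_lt_of_le (mem_range.mp hm) h
  have : Aset t n = (Finset.range (t - 3)).attachFin h' := by
    ext a
    simp [Aset, mem_attachFin]
  rw [this, card_attachFin, card_range]

lemma card_erase_univ {n : ℕ} (j : Fin n) : (Finset.univ.erase j).card = n - 1 := by
  rw [card_erase_of_mem (mem_univ j), card_univ, Fintype.card_fin]

lemma erase_univ_inj {n : ℕ} {a b : Fin n} (h : Finset.univ.erase a = Finset.univ.erase b) :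
    a = b := by
  by_contra hab
  have : a ∈ Finset.univ.erase b := mem_erase.mpr ⟨hab, mem_univ a⟩
  rw [← h] at this
  exact (mem_erase.mp this).1 rfl

def auxE (t n : ℕ) (h : t ≤ n) (e : Finset (Fin n)) (c : Fin n) : Fin (t - 1) → Finset (Fin n) :=
  fun k => if (k : ℕ) = 0 then e else if (k : ℕ) = 1 then Finset.univ
    else if (k : ℕ) - 2 = (c : ℕ) then Aset t n
    else Finset.univ.erase ⟨(k : ℕ) - 2, by have := k.isLt; omega⟩

lemma auxE_inj {t n : ℕ} (h : t ≤ n) (e : Finset (Fin n)) (c : Fin n)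
    (h1 : e ≠ Aset t n) (h2 : e ≠ Finset.univ) (h3 : ∀ j : Fin n, (j : ℕ) < t - 3 → e ≠ Finset.univ.erase j)
    (h4 : Aset t n ≠ Finset.univ) (h5 : ∀ j : Fin n, Aset t n ≠ Finset.univ.erase j)
    (h6 : ∀ j : Fin n, (Finset.univ : Finset (Fin n)) ≠ Finset.univ.erase j) :
    Function.Injective (auxE t n h e c) := by
  intro k1 k2 hk
  apply Fin.ext
  have hlt1 := k1.isLt
  have hlt2 := k2.isLt
  unfold auxE at hk
  split_ifs at hk with a1 a2 b1 b2 b3 b4 b5 b6 b7 b8 b9 b10 b11 b12 b13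
  all_goals first
    | omega
    | (exact absurd hk h1) | (exact absurd hk h2) | (exact absurd hk (h3 _ (by simp only []; omega)))
    | (exact absurd hk.symm h1) | (exact absurd hk.symm h2) | (exact absurd hk.symm (h3 _ (by simp only []; omega)))
    | (exact absurd hk h4) | (exact absurd hk.symm h4)
    | (exact absurd hk (h5 _)) | (exact absurd hk.symm (h5 _))
    | (exact absurd hk (h6 _)) | (exact absurd hk.symm (h6 _))
    | (have := congrArg Fin.val (erase_univ_inj hk); simp only [] at this; omega)

lemma sat_step {t n : ℕ} (ht : 5 ≤ t) (hn : t ≤ n) (e : Finset (Fin n))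
    (he : e ∉ Ht t n) (hecard : 2 ≤ e.card) : HasBergeStar t n (insert e (Ht t n)) := by
  classical
  have hAcard : (Aset t n).card = t - 3 := card_Aset (by omega)
  have hAe : e ≠ Aset t n := fun h => he (mem_Ht.mpr (Or.inl h))
  have hUe : e ≠ Finset.univ := fun h => he (mem_Ht.mpr (Or.inr (Or.inl h)))
  have hEe : ∀ j : Fin n, (j : ℕ) < t - 3 → e ≠ Finset.univ.erase j := fun j hj h =>
    he (mem_Ht.mpr (Or.inr (Or.inr ⟨j, hj, h⟩)))
  have hAU : Aset t n ≠ Finset.univ := by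
    intro h
    have := congrArg Finset.card h
    rw [hAcard, card_univ, Fintype.card_fin] at this
    omega
  have hAEr : ∀ j : Fin n, Aset t n ≠ Finset.univ.erase j := by
    intro j h
    have := congrArg Finset.card h
    rw [hAcard, card_erase_univ] at this
    omega
  have hUEr : ∀ j : Fin n, (Finset.univ : Finset (Fin n)) ≠ Finset.univ.erase j := by
    intro j h
    have := congrArg Finset.card h
    rw [card_univ, Fintype.card_fin, card_erase_univ] at this
    omega
  have hene : e.Nonempty := card_pos.mp (by omega)
  set c := e.max' hene with hcdef
  have hc : c ∈ e := e.max'_mem hene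
  have hs3 : (c : ℕ) < t - 3 → 3 ≤ t - 3 := by
    intro hlt
    have hsub : e ⊆ Aset t n := fun x hx =>
      mem_filter.mpr ⟨mem_univ x, lt_of_le_of_lt (Fin.le_def.mp (e.le_max' x hx)) hlt⟩
    have := card_lt_card (ssubset_of_subset_of_ne hsub hAe)
    omega
  set E := auxE t n hn e c with hEdef
  have hEinj : Function.Injective E := auxE_inj hn e c hAe hUe hEe hAU hAEr hUEr
  -- values of E
  have hE0 : ∀ k : Fin (t - 1), (k : ℕ) = 0 → E k = e := by
    intro k hk; simp [hEdef, auxE, hk]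
  have hE1 : ∀ k : Fin (t - 1), (k : ℕ) = 1 → E k = Finset.univ := by
    intro k hk; simp [hEdef, auxE, hk]
  have hEA : ∀ k : Fin (t - 1), 2 ≤ (k : ℕ) → (k : ℕ) - 2 = (c : ℕ) → E k = Aset t n := by
    intro k h2 hkc
    simp only [hEdef, auxE]
    rw [if_neg (by omega), if_neg (by omega), if_pos hkc]
  have hEer : ∀ k : Fin (t - 1), 2 ≤ (k : ℕ) → (k : ℕ) - 2 ≠ (c : ℕ) →
      E k = Finset.univ.erase ⟨(k : ℕ) - 2, by have := k.isLt; omega⟩ := by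
    intro k h2 hkc
    simp only [hEdef, auxE]
    rw [if_neg (by omega), if_neg (by omega), if_neg hkc]
  have hmem : ∀ k : Fin (t - 1), E k ∈ insert e (Ht t n) ∧ c ∈ E k := by
    intro k
    have hklt := k.isLt
    rcases Nat.lt_or_ge (k : ℕ) 2 with hk2 | hk2
    · rcases Nat.lt_or_ge (k : ℕ) 1 with hk1 | hk1
      · rw [hE0 k (by omega)]; exact ⟨mem_insert_self _ _, hc⟩
      · rw [hE1 k (by omega)]
        exact ⟨mem_insert_of_mem (mem_Ht.mpr (Or.inr (Or.inl rfl))), mem_univ c⟩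
    · by_cases hkc : (k : ℕ) - 2 = (c : ℕ)
      · rw [hEA k hk2 hkc]
        refine ⟨mem_insert_of_mem (mem_Ht.mpr (Or.inl rfl)), ?_⟩
        exact mem_filter.mpr ⟨mem_univ c, by omega⟩
      · rw [hEer k hk2 hkc]
        refine ⟨mem_insert_of_mem (mem_Ht.mpr (Or.inr (Or.inr
          ⟨⟨(k : ℕ) - 2, by omega⟩, by simp only []; omega, rfl⟩))), ?_⟩
        exact mem_erase.mpr ⟨fun h => hkc (by rw [h]), mem_univ c⟩
  -- Hall's condition
  set r : Fin (t - 1) → Finset (Fin n) := fun k => (E k).erase c with hrdef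
  have hcard_le : ∀ S : Finset (Fin (t - 1)), S.card ≤ t - 1 := by
    intro S
    calc S.card ≤ (Finset.univ : Finset (Fin (t - 1))).card := card_le_univ S
    _ = t - 1 := by rw [card_univ, Fintype.card_fin]
  have hsubB : ∀ (S : Finset (Fin (t - 1))) (k : Fin (t - 1)), k ∈ S →
      (r k).card ≤ (S.biUnion r).card := fun S k hk =>
    card_le_card (subset_biUnion_of_mem r hk)
  have one : Fin (t - 1) := ⟨1, by omega⟩
  have hall : ∀ S : Finset (Fin (t - 1)), S.card ≤ (S.biUnion r).card := by
    intro S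
    by_cases hone : (⟨1, by omega⟩ : Fin (t - 1)) ∈ S
    · have h1 : r ⟨1, by omega⟩ = Finset.univ.erase c := by
        rw [hrdef]; simp only []; rw [hE1 _ rfl]
      have hb := hsubB S _ hone
      rw [h1, card_erase_univ] at hb
      have := hcard_le S
      omega
    · have hS2 : S.card ≤ t - 2 := by
        have hsub : S ⊆ Finset.univ.erase (⟨1, by omega⟩ : Fin (t - 1)) := fun x hx =>
          mem_erase.mpr ⟨fun h => hone (h ▸ hx), mem_univ x⟩
        have := card_le_card hsub
        rw [card_erase_univ] at this
        omega
      by_cases hb : ∃ k ∈ S, 2 ≤ (k : ℕ) ∧ (k : ℕ) - 2 ≠ (c : ℕ)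
      · obtain ⟨k, hkS, hk2, hkc⟩ := hb
        have hrk : r k = (Finset.univ.erase (⟨(k : ℕ) - 2, by have := k.isLt; omega⟩ : Fin n)).erase c := by
          rw [hrdef]; simp only []; rw [hEer k hk2 hkc]
        have hcmem : c ∈ Finset.univ.erase (⟨(k : ℕ) - 2, by have := k.isLt; omega⟩ : Fin n) :=
          mem_erase.mpr ⟨fun h => hkc (by rw [h]), mem_univ c⟩
        have hcard : (r k).card = n - 2 := by
          rw [hrk, card_erase_of_mem hcmem, card_erase_univ]; omega
        have hbb := hsubB S _ hkS
        rw [hcard] at hbb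
        omega
      · push_neg at hb
        by_cases hcc : ∃ k ∈ S, 2 ≤ (k : ℕ)
        · obtain ⟨k, hkS, hk2⟩ := hcc
          have hkc : (k : ℕ) - 2 = (c : ℕ) := hb k hkS hk2
          have hclt : (c : ℕ) < t - 3 := by have := k.isLt; omega
          have hrk : r k = (Aset t n).erase c := by
            rw [hrdef]; simp only []; rw [hEA k hk2 hkc]
          have hcA : c ∈ Aset t n := mem_filter.mpr ⟨mem_univ c, hclt⟩
          have hcard : (r k).card = t - 3 - 1 := by
            rw [hrk, card_erase_of_mem hcA, hAcard]
          have hbb := hsubB S _ hkS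
          rw [hcard] at hbb
          have h33 := hs3 hclt
          have hSsub : S ⊆ {⟨0, by omega⟩, k} := by
            intro x hx
            have hxlt := x.isLt
            rcases Nat.lt_or_ge (x : ℕ) 2 with hx2 | hx2
            · rcases Nat.lt_or_ge (x : ℕ) 1 with hx1 | hx1
              · exact mem_insert.mpr (Or.inl (Fin.ext (by first | omega | (simp only [Fin.val_mk]; omega))))
              · exact absurd hx (by
                  have : x = (⟨1, by omega⟩ : Fin (t - 1)) := Fin.ext (by first | omega | (simp only [Fin.val_mk]; omega))
                  rw [this]; exact hone)
            · have := hb x hx hx2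
              exact mem_insert.mpr (Or.inr (mem_singleton.mpr (Fin.ext (by first | omega | (simp only [Fin.val_mk]; omega)))))
          have hS2' : S.card ≤ 2 := le_trans (card_le_card hSsub) (card_insert_le _ _ |>.trans (by rw [card_singleton]))
          omega
        · push_neg at hcc
          rcases S.eq_empty_or_nonempty with rfl | ⟨x, hx⟩
          · simp
          · have hx0 : x = (⟨0, by omega⟩ : Fin (t - 1)) := by
              have h2 := hcc x hx
              have hx1 : (x : ℕ) ≠ 1 := fun h => hone (by
                have : x = (⟨1, by omega⟩ : Fin (t - 1)) := Fin.ext h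
                rw [← this]; exact hx)
              exact Fin.ext (by first | omega | (simp only [Fin.val_mk]; omega))
            have hr0 : r x = e.erase c := by
              rw [hrdef]; simp only []; rw [hE0 x (by rw [hx0])]
            have hcard : 1 ≤ (r x).card := by
              rw [hr0, card_erase_of_mem hc]; omega
            have hbb := hsubB S _ hx
            have hSsub : S ⊆ {(⟨0, by omega⟩ : Fin (t - 1))} := fun y hy => by
              have h2 := hcc y hy
              have hy1 : (y : ℕ) ≠ 1 := fun h => hone (by
                have : y = (⟨1, by omega⟩ : Fin (t - 1)) := Fin.ext h
                rw [← this]; exact hy)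
              exact mem_singleton.mpr (Fin.ext (by first | omega | (simp only [Fin.val_mk]; omega)))
            have := card_le_card hSsub
            rw [card_singleton] at this
            omega
  obtain ⟨v, hvinj, hv⟩ := (Finset.all_card_le_biUnion_card_iff_exists_injective r).mp hall
  exact ⟨E, c, v, hEinj, hvinj, fun k => (mem_erase.mp (hv k)).1,
    fun k => ⟨(hmem k).1, (hmem k).2, (mem_erase.mp (hv k)).2⟩⟩

lemma card_Ht {t n : ℕ} (ht : 5 ≤ t) (hn : t ≤ n) : (Ht t n).card = t - 1 := by
  have hAcard : (Aset t n).card = t - 3 := card_Aset (by omega)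
  have hAU : Aset t n ≠ Finset.univ := by
    intro h
    have := congrArg Finset.card h
    rw [hAcard, card_univ, Fintype.card_fin] at this
    omega
  have hAEr : ∀ j : Fin n, Aset t n ≠ Finset.univ.erase j := by
    intro j h
    have := congrArg Finset.card h
    rw [hAcard, card_erase_univ] at this
    omega
  have hUEr : ∀ j : Fin n, (Finset.univ : Finset (Fin n)) ≠ Finset.univ.erase j := by
    intro j h
    have := congrArg Finset.card h
    rw [card_univ, Fintype.card_fin, card_erase_univ] at this
    omega
  show (insert (Aset t n) (insert Finset.univ ((Aset t n).image (fun i => Finset.univ.erase i)))).card = t - 1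
  rw [card_insert_of_notMem, card_insert_of_notMem, card_image_of_injOn, hAcard]
  · omega
  · exact fun a _ b _ h => erase_univ_inj h
  · intro h
    obtain ⟨i, _, hi⟩ := mem_image.mp h
    exact hUEr i hi.symm
  · intro h
    rcases mem_insert.mp h with h | h
    · exact hAU h
    · obtain ⟨i, _, hi⟩ := mem_image.mp h
      exact hAEr i hi.symm

lemma no_star {t n : ℕ} (ht : 5 ≤ t) (hn : t ≤ n) : ¬ HasBergeStar t n (Ht t n) := by
  rintro ⟨E, c, v, hEinj, -, -, hE⟩
  have himage : Finset.univ.image E ⊆ Ht t n := by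
    intro X hX
    obtain ⟨k, -, rfl⟩ := mem_image.mp hX
    exact (hE k).1
  have heq : Finset.univ.image E = Ht t n := by
    apply eq_of_subset_of_card_le himage
    rw [card_image_of_injective _ hEinj, card_univ, Fintype.card_fin, card_Ht ht hn]
  have hA : Aset t n ∈ Finset.univ.image E := by
    rw [heq]; exact mem_Ht.mpr (Or.inl rfl)
  obtain ⟨k, -, hk⟩ := mem_image.mp hA
  have hcA : (c : ℕ) < t - 3 := by
    have := (hE k).2.1
    rw [hk] at this
    exact (mem_filter.mp this).2
  have hAe : Finset.univ.erase c ∈ Finset.univ.image E := by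
    rw [heq]; exact mem_Ht.mpr (Or.inr (Or.inr ⟨c, hcA, rfl⟩))
  obtain ⟨k', -, hk'⟩ := mem_image.mp hAe
  have := (hE k').2.1
  rw [hk'] at this
  exact (mem_erase.mp this).1 rfl


/-- For `t ≥ 5` and `n ≥ t`, the hypergraph `H_t(n)` is Berge-`S_t` saturated and has `t - 1`
hyperedges; in particular `sat(n, B(S_t)) ≤ t - 1`. -/
theorem Ht_starSat (t n : ℕ) (ht : 5 ≤ t) (hn : t ≤ n) :
    StarSat t n (Ht t n) ∧ (Ht t n).card = t - 1 := by
  refine ⟨⟨?_, no_star ht hn, fun e he hcard => sat_step ht hn e he hcard⟩, card_Ht ht hn⟩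
  intro X hX
  rcases mem_Ht.mp hX with h | h | ⟨i, hi, h⟩
  · rw [h, card_Aset (by omega)]; omega
  · rw [h, card_univ, Fintype.card_fin]; omega
  · rw [h, card_erase_univ]; omega
end

section
/- For t ≥ 5 and n ≥ t: if e ⊆ [n] with |e| ≥ 2 and e ∉ E(H_t(n)), then H_t(n) + e contains a Berge-S_t subhypergraph. -/
open Finset

lemma pick_aux (n : ℕ) : ∀ (r : ℕ) (x : Fin r → Fin n) (F : Finset (Fin n)),
    F.card + r + 1 ≤ n → ∃ v : Fin r → Fin n, Function.Injective v ∧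
      ∀ k, v k ∉ F ∧ v k ≠ x k := by
  intro r
  induction r with
  | zero =>
    intro x F _
    exact ⟨fun k => k.elim0, fun k => k.elim0, fun k => k.elim0⟩
  | succ r ih =>
    intro x F hF
    obtain ⟨v', hv'inj, hv'⟩ := ih (fun k => x k.castSucc) F (by omega)
    set S : Finset (Fin n) :=
      insert (x (Fin.last r)) (F ∪ Finset.univ.image v') with hS
    have hcard : S.card < n := by
      have h1 : S.card ≤ (F ∪ Finset.univ.image v').card + 1 := card_insert_le _ _
      have h2 : (F ∪ Finset.univ.image v').card ≤ F.card + (Finset.univ.image v').card :=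
        card_union_le _ _
      have h3 : (Finset.univ.image v').card ≤ (Finset.univ : Finset (Fin r)).card :=
        card_image_le
      simp only [card_univ, Fintype.card_fin] at h3
      omega
    have hne : (Sᶜ).Nonempty := by
      rw [← Finset.card_pos, Finset.card_compl]
      simp only [Fintype.card_fin]
      omega
    obtain ⟨b, hb⟩ := hne
    rw [Finset.mem_compl, hS, mem_insert, Finset.mem_union] at hb
    push_neg at hb
    obtain ⟨hbx, hbF, hbimg⟩ := hb
    have hbv : ∀ j, b ≠ v' j := fun j h => hbimg (h ▸ mem_image_of_mem v' (mem_univ j))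
    refine ⟨Fin.snoc v' b, ?_, ?_⟩
    · intro k1 k2 h
      induction k1 using Fin.lastCases with
      | last =>
        induction k2 using Fin.lastCases with
        | last => rfl
        | cast k2 =>
          rw [Fin.snoc_last, Fin.snoc_castSucc] at h
          exact absurd h (hbv k2)
      | cast k1 =>
        induction k2 using Fin.lastCases with
        | last =>
          rw [Fin.snoc_last, Fin.snoc_castSucc] at h
          exact absurd h.symm (hbv k1)
        | cast k2 =>
          rw [Fin.snoc_castSucc, Fin.snoc_castSucc] at h
          exact congrArg Fin.castSucc (hv'inj h)
    · intro k
      induction k using Fin.lastCases with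
      | last => rw [Fin.snoc_last]; exact ⟨hbF, hbx⟩
      | cast k => rw [Fin.snoc_castSucc]; exact (hv' k)

lemma build (t n r q : ℕ) (H' : Finset (Finset (Fin n))) (c : Fin n)
    (x : Fin r → Fin n) (s : Fin q → Finset (Fin n)) (w : Fin q → Fin n)
    (hN : r + q + 1 = t - 1) (htn : t ≤ n) (ht1 : 1 ≤ t)
    (hx : Function.Injective x)
    (hxc : ∀ k, x k ≠ c)
    (hxH : ∀ k, Finset.univ.erase (x k) ∈ H')
    (huH : Finset.univ ∈ H')
    (hsH : ∀ j, s j ∈ H')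
    (hs_inj : Function.Injective s)
    (hcs : ∀ j, c ∈ s j)
    (hw : ∀ j, w j ∈ s j)
    (hwc : ∀ j, w j ≠ c)
    (hw_inj : Function.Injective w)
    (hs_ne_univ : ∀ j, s j ≠ Finset.univ)
    (hs_ne_erase : ∀ j k, s j ≠ Finset.univ.erase (x k)) :
    HasBergeStar t n H' := by
  classical
  set F : Finset (Fin n) := insert c (Finset.univ.image w) with hF
  have hFcard : F.card ≤ q + 1 := by
    have h1 : F.card ≤ (Finset.univ.image w).card + 1 := card_insert_le _ _
    have h3 : (Finset.univ.image w).card ≤ (Finset.univ : Finset (Fin q)).card :=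
      card_image_le
    simp only [card_univ, Fintype.card_fin] at h3
    omega
  obtain ⟨v', hv'inj, hv'⟩ := pick_aux n r x F (by omega)
  -- pick u for univ
  have hune : ((F ∪ Finset.univ.image v')ᶜ).Nonempty := by
    rw [← Finset.card_pos, Finset.card_compl]
    have h2 : (F ∪ Finset.univ.image v').card ≤ F.card + (Finset.univ.image v').card :=
      card_union_le _ _
    have h3 : (Finset.univ.image v').card ≤ (Finset.univ : Finset (Fin r)).card :=
      card_image_le
    simp only [card_univ, Fintype.card_fin] at h3
    simp only [Fintype.card_fin]
    omega
  obtain ⟨u, hu⟩ := hune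
  rw [Finset.mem_compl, Finset.mem_union] at hu
  push_neg at hu
  obtain ⟨huF, huimg⟩ := hu
  have huv : ∀ j, u ≠ v' j := fun j h => huimg (h ▸ mem_image_of_mem v' (mem_univ j))
  have hwF : ∀ j, w j ∈ F := fun j => mem_insert_of_mem (mem_image_of_mem w (mem_univ j))
  have hcF : c ∈ F := mem_insert_self _ _
  have hv'w : ∀ k j, v' k ≠ w j := fun k j h => (hv' k).1 (h ▸ hwF j)
  have hv'c : ∀ k, v' k ≠ c := fun k h => (hv' k).1 (h ▸ hcF)
  refine ⟨fun k => if h : k.val < r then Finset.univ.erase (x ⟨k.val, h⟩)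
      else if h2 : k.val < r + q then s ⟨k.val - r, by omega⟩ else Finset.univ,
    c,
    fun k => if h : k.val < r then v' ⟨k.val, h⟩
      else if h2 : k.val < r + q then w ⟨k.val - r, by omega⟩ else u,
    ?_, ?_, ?_, ?_⟩
  · -- injective E
    intro k1 k2 heq
    have hk1 := k1.isLt; have hk2 := k2.isLt
    apply Fin.ext
    by_cases h1 : k1.val < r <;> by_cases h2 : k2.val < r
    · simp only [dif_pos h1, dif_pos h2] at heq
      have : x ⟨k1.val, h1⟩ = x ⟨k2.val, h2⟩ := by
        by_contra hne
        have : x ⟨k1.val, h1⟩ ∈ Finset.univ.erase (x ⟨k2.val, h2⟩) :=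
          mem_erase.mpr ⟨hne, mem_univ _⟩
        rw [← heq] at this
        exact (mem_erase.mp this).1 rfl
      have := congrArg Fin.val (hx this)
      simpa using this
    · simp only [dif_pos h1, dif_neg h2] at heq
      by_cases h3 : k2.val < r + q
      · simp only [dif_pos h3] at heq
        exact absurd heq.symm (hs_ne_erase _ _)
      · simp only [dif_neg h3] at heq
        exfalso
        have : x ⟨k1.val, h1⟩ ∈ Finset.univ.erase (x ⟨k1.val, h1⟩) := by
          rw [heq]; exact mem_univ _
        exact (mem_erase.mp this).1 rfl
    · simp only [dif_pos h2, dif_neg h1] at heq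
      by_cases h3 : k1.val < r + q
      · simp only [dif_pos h3] at heq
        exact absurd heq (hs_ne_erase _ _)
      · simp only [dif_neg h3] at heq
        exfalso
        have : x ⟨k2.val, h2⟩ ∈ Finset.univ.erase (x ⟨k2.val, h2⟩) := by
          rw [← heq]; exact mem_univ _
        exact (mem_erase.mp this).1 rfl
    · simp only [dif_neg h1, dif_neg h2] at heq
      by_cases h3 : k1.val < r + q <;> by_cases h4 : k2.val < r + q
      · simp only [dif_pos h3, dif_pos h4] at heq
        have := hs_inj heq
        have := congrArg Fin.val this
        simp at this
        omega
      · simp only [dif_pos h3, dif_neg h4] at heq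
        exact absurd heq (hs_ne_univ _)
      · simp only [dif_neg h3, dif_pos h4] at heq
        exact absurd heq.symm (hs_ne_univ _)
      · omega
  · -- injective v
    intro k1 k2 heq
    have hk1 := k1.isLt; have hk2 := k2.isLt
    apply Fin.ext
    by_cases h1 : k1.val < r <;> by_cases h2 : k2.val < r
    · simp only [dif_pos h1, dif_pos h2] at heq
      have := congrArg Fin.val (hv'inj heq)
      simpa using this
    · simp only [dif_pos h1, dif_neg h2] at heq
      by_cases h3 : k2.val < r + q
      · simp only [dif_pos h3] at heq
        exact absurd heq (hv'w _ _)
      · simp only [dif_neg h3] at heq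
        exact absurd heq.symm (huv _)
    · simp only [dif_pos h2, dif_neg h1] at heq
      by_cases h3 : k1.val < r + q
      · simp only [dif_pos h3] at heq
        exact absurd heq.symm (hv'w _ _)
      · simp only [dif_neg h3] at heq
        exact absurd heq (huv _)
    · simp only [dif_neg h1, dif_neg h2] at heq
      by_cases h3 : k1.val < r + q <;> by_cases h4 : k2.val < r + q
      · simp only [dif_pos h3, dif_pos h4] at heq
        have := congrArg Fin.val (hw_inj heq)
        simp at this
        omega
      · simp only [dif_pos h3, dif_neg h4] at heq
        exact absurd heq.symm (fun h => huF (h ▸ hwF _))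
      · simp only [dif_neg h3, dif_pos h4] at heq
        exact absurd heq (fun h => huF (h ▸ hwF _))
      · omega
  · -- v k ≠ c
    intro k
    by_cases h1 : k.val < r
    · simp only [dif_pos h1]; exact hv'c _
    · by_cases h2 : k.val < r + q
      · simp only [dif_neg h1, dif_pos h2]; exact hwc _
      · simp only [dif_neg h1, dif_neg h2]
        exact fun h => huF (h ▸ hcF)
  · -- membership
    intro k
    by_cases h1 : k.val < r
    · simp only [dif_pos h1]
      exact ⟨hxH _, mem_erase.mpr ⟨Ne.symm (hxc _), mem_univ _⟩,
        mem_erase.mpr ⟨(hv' ⟨k.val, h1⟩).2, mem_univ _⟩⟩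
    · by_cases h2 : k.val < r + q
      · simp only [dif_neg h1, dif_pos h2]
        exact ⟨hsH _, hcs _, hw _⟩
      · simp only [dif_neg h1, dif_neg h2]
        exact ⟨huH, mem_univ _, mem_univ _⟩

/-- For `t ≥ 5` and `n ≥ t`: adding to `H_t(n)` any new hyperedge `e ⊆ [n]` with `|e| ≥ 2`
creates a Berge-`S_t` subhypergraph. -/
theorem Ht_add_edge (t n : ℕ) (ht : 5 ≤ t) (hn : t ≤ n) (e : Finset (Fin n))
    (he : 2 ≤ e.card) (hne : e ∉ Ht t n) :
    HasBergeStar t n (insert e (Ht t n)) := by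
  classical
  set A : Finset (Fin n) := Finset.univ.filter (fun i : Fin n => (i : ℕ) < t - 3) with hA
  have hA_mem : A ∈ Ht t n := mem_insert_self _ _
  have huniv_mem : (Finset.univ : Finset (Fin n)) ∈ Ht t n :=
    mem_insert_of_mem (mem_insert_self _ _)
  have herase_mem : ∀ i : Fin n, (i : ℕ) < t - 3 → Finset.univ.erase i ∈ Ht t n := by
    intro i hi
    exact mem_insert_of_mem (mem_insert_of_mem
      (mem_image_of_mem _ (mem_filter.mpr ⟨mem_univ _, hi⟩)))
  have heu : e ≠ Finset.univ := fun h => hne (h ▸ huniv_mem)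
  have heA : e ≠ A := fun h => hne (h ▸ hA_mem)
  -- a "high" vertex
  have hhvA : (⟨t - 3, by omega⟩ : Fin n) ∉ A := by simp [hA]
  have hAu : A ≠ Finset.univ := fun h => hhvA (h ▸ mem_univ _)
  have hmemA : ∀ y : Fin n, (y : ℕ) < t - 3 → y ∈ A := fun y hy =>
    mem_filter.mpr ⟨mem_univ _, hy⟩
  by_cases hcase : ∃ c ∈ e, (c : ℕ) < t - 3
  · -- Case 1 : e has a low vertex c
    obtain ⟨c, hce, hclow⟩ := hcase
    have hcA : c ∈ A := hmemA c hclow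
    -- choose ve ∈ e, va ∈ A, both ≠ c and ve ≠ va
    have hx0 : (e.erase c).Nonempty := by
      rw [← card_pos, card_erase_of_mem hce]; omega
    obtain ⟨x0, hx0e⟩ := hx0
    obtain ⟨hx0c, hx0e'⟩ := mem_erase.mp hx0e
    have hvs : ∃ ve va : Fin n, ve ∈ e ∧ va ∈ A ∧ ve ≠ c ∧ va ≠ c ∧ ve ≠ va := by
      by_cases hAer : ((A.erase c).erase x0).Nonempty
      · obtain ⟨va, hva⟩ := hAer
        obtain ⟨hvax0, hva'⟩ := mem_erase.mp hva
        obtain ⟨hvac, hvaA⟩ := mem_erase.mp hva'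
        exact ⟨x0, va, hx0e', hvaA, hx0c, hvac, fun h => hvax0 h.symm⟩
      · have key : ∀ y ∈ A.erase c, y = x0 := by
          intro y hy
          by_contra h
          exact hAer ⟨y, mem_erase.mpr ⟨h, hy⟩⟩
        -- A has two low vertices 0 and 1
        have h0 : (⟨0, by omega⟩ : Fin n) ∈ A := hmemA ⟨0, by omega⟩ (by show (0:ℕ) < t - 3; omega)
        have h1 : (⟨1, by omega⟩ : Fin n) ∈ A := hmemA ⟨1, by omega⟩ (by show (1:ℕ) < t - 3; omega)
        have h01 : (⟨0, by omega⟩ : Fin n) ≠ (⟨1, by omega⟩ : Fin n) := by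
          simp [Fin.ext_iff]
        have hy0 : ∃ y0 ∈ A, y0 ≠ c := by
          by_cases h : (⟨0, by omega⟩ : Fin n) = c
          · exact ⟨_, h1, fun hh => h01 (h.symm ▸ hh ▸ rfl)⟩
          · exact ⟨_, h0, h⟩
        obtain ⟨y0, hy0A, hy0c⟩ := hy0
        have hy0x0 : y0 = x0 := key y0 (mem_erase.mpr ⟨hy0c, hy0A⟩)
        have hx0A : x0 ∈ A := hy0x0 ▸ hy0A
        have hAeq : A = insert c {x0} := by
          apply Finset.Subset.antisymm
          · intro y hyA
            rcases eq_or_ne y c with h | h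
            · simp [h]
            · simp [key y (mem_erase.mpr ⟨h, hyA⟩)]
          · intro y hy
            rcases mem_insert.mp hy with h | h
            · exact h ▸ hcA
            · exact (mem_singleton.mp h) ▸ hx0A
        have hcardA : A.card = 2 := by
          rw [hAeq, card_insert_of_notMem (by simp [Ne.symm hx0c]), card_singleton]
        have hsubs : ¬ e ⊆ A := by
          intro hsub
          exact heA (Finset.eq_of_subset_of_card_le hsub (by omega))
        obtain ⟨y, hye, hyA⟩ := not_subset.mp hsubs
        exact ⟨y, x0, hye, hx0A, fun h => hyA (h ▸ hcA), hx0c,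
          fun h => hyA (h ▸ hx0A)⟩
    obtain ⟨ve, va, hvee, hvaA, hvec, hvac, hveva⟩ := hvs
    -- build with r = t-4, q = 2
    refine build t n (t - 4) 2 _ c
      (fun k => ⟨if (k : ℕ) < (c : ℕ) then (k : ℕ) else (k : ℕ) + 1,
        by have := k.isLt; split <;> omega⟩)
      ![e, A] ![ve, va]
      (by omega) hn (by omega) ?_ ?_ ?_
      (mem_insert_of_mem huniv_mem) ?_ ?_ ?_ ?_ ?_ ?_ ?_ ?_
    · intro k1 k2 h
      have h' := congrArg Fin.val h
      simp only at h'
      apply Fin.ext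
      split_ifs at h' <;> omega
    · intro k
      intro h
      have h' := congrArg Fin.val h
      simp only at h'
      split_ifs at h' <;> omega
    · intro k
      apply mem_insert_of_mem
      apply herase_mem
      have := k.isLt
      simp only
      split_ifs <;> omega
    · intro j
      fin_cases j
      · exact mem_insert_self _ _
      · exact mem_insert_of_mem hA_mem
    · intro j1 j2 h
      fin_cases j1 <;> fin_cases j2 <;> simp_all
    · intro j; fin_cases j
      · exact hce
      · exact hcA
    · intro j; fin_cases j
      · exact hvee
      · exact hvaA
    · intro j; fin_cases j
      · exact hvec
      · exact hvac
    · intro j1 j2 h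
      fin_cases j1 <;> fin_cases j2 <;> simp_all
    · intro j; fin_cases j
      · exact heu
      · exact hAu
    · intro j k
      fin_cases j
      · intro h
        have h' : e = Finset.univ.erase _ := h
        apply hne
        rw [h']
        apply herase_mem
        have hk := k.isLt
        show (if (k : ℕ) < (c : ℕ) then (k : ℕ) else (k : ℕ) + 1) < t - 3
        split <;> omega
      · intro h
        have h' : A = Finset.univ.erase _ := h
        apply hhvA
        rw [h']
        refine mem_erase.mpr ⟨?_, mem_univ _⟩
        have hk := k.isLt
        simp only [Ne, Fin.ext_iff]
        show ¬ (t - 3 = if (k : ℕ) < (c : ℕ) then (k : ℕ) else (k : ℕ) + 1)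
        split <;> omega
  · -- Case 2 : all vertices of e are high
    push_neg at hcase
    have hc : e.Nonempty := by rw [← card_pos]; omega
    obtain ⟨c, hce⟩ := hc
    have hw0 : (e.erase c).Nonempty := by
      rw [← card_pos, card_erase_of_mem hce]; omega
    obtain ⟨w0, hw0e⟩ := hw0
    obtain ⟨hw0c, hw0e'⟩ := mem_erase.mp hw0e
    have hchigh := hcase c hce
    refine build t n (t - 3) 1 _ c
      (fun k => ⟨(k : ℕ), by have := k.isLt; omega⟩)
      ![e] ![w0]
      (by omega) hn (by omega) ?_ ?_ ?_
      (mem_insert_of_mem huniv_mem) ?_ ?_ ?_ ?_ ?_ ?_ ?_ ?_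
    · intro k1 k2 h
      have h' := congrArg Fin.val h
      simp only at h'
      exact Fin.ext h'
    · intro k h
      have h' := congrArg Fin.val h
      simp only at h'
      have := k.isLt
      omega
    · intro k
      apply mem_insert_of_mem
      apply herase_mem
      exact k.isLt
    · intro j; fin_cases j; exact mem_insert_self _ _
    · intro j1 j2 h
      fin_cases j1 <;> fin_cases j2 <;> simp_all
    · intro j; fin_cases j; exact hce
    · intro j; fin_cases j; exact hw0e'
    · intro j; fin_cases j; exact hw0c
    · intro j1 j2 h
      fin_cases j1 <;> fin_cases j2 <;> simp_all
    · intro j; fin_cases j; exact heu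
    · intro j k
      fin_cases j
      intro h
      have h' : e = Finset.univ.erase (⟨(k : ℕ), by have := k.isLt; omega⟩ : Fin n) := h
      exact hne (h'.symm ▸ herase_mem _ k.isLt)
end

section
/- For n ≥ 4, the hypergraph ([n], {[n], [n]\{1}}) is Berge-S_4 saturated; hence sat(n, B(S_4)) = 2. -/
open Finset

lemma card_ge_of_star {n : ℕ} {H : Finset (Finset (Fin n))} (h : HasBergeStar 4 n H) :
    3 ≤ H.card := by
  obtain ⟨E, c, v, hE, hv, hvc, hk⟩ := h
  have hsub : (Finset.univ.image E) ⊆ H := by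
    intro x hx
    simp only [mem_image] at hx
    obtain ⟨k, _, rfl⟩ := hx
    exact (hk k).1
  calc 3 = (Finset.univ.image E).card := by
        rw [Finset.card_image_of_injective _ hE, Finset.card_univ]; rfl
    _ ≤ H.card := card_le_card hsub

lemma exists_notin {n : ℕ} (hn : 4 ≤ n) (a b c : Fin n) :
    ∃ x : Fin n, x ≠ a ∧ x ≠ b ∧ x ≠ c := by
  have h : ({a, b, c} : Finset (Fin n)).card < (Finset.univ : Finset (Fin n)).card := by
    have h1 := Finset.card_insert_le a ({b, c} : Finset (Fin n))
    have h2 := Finset.card_insert_le b ({c} : Finset (Fin n))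
    simp only [Finset.card_singleton, Finset.card_univ, Fintype.card_fin] at *
    omega
  have hne : ((Finset.univ : Finset (Fin n)) \ {a, b, c}).Nonempty := by
    rw [← Finset.card_pos, Finset.card_sdiff_of_subset (Finset.subset_univ _)]
    omega
  obtain ⟨x, hx⟩ := hne
  rw [Finset.mem_sdiff] at hx
  have hx' := hx.2
  simp only [mem_insert, mem_singleton, not_or] at hx'
  exact ⟨x, hx'.1, hx'.2.1, hx'.2.2⟩

/-- For `n ≥ 4`, the hypergraph `([n], {[n], [n] \ {1}})` is Berge-`S_4` saturated; hence
`sat(n, B(S_4)) = 2`. -/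
theorem sat_S4 (n : ℕ) (hn : 4 ≤ n) :
    StarSat 4 n ({Finset.univ, Finset.univ.erase ⟨0, by omega⟩} : Finset (Finset (Fin n))) ∧
    IsLeast {m : ℕ | ∃ H : Finset (Finset (Fin n)), StarSat 4 n H ∧ H.card = m} 2 := by
  set z0 : Fin n := ⟨0, by omega⟩ with hz0
  have huniv_ne : (Finset.univ : Finset (Fin n)) ≠ Finset.univ.erase z0 := by
    intro h
    have : z0 ∈ Finset.univ.erase z0 := h ▸ Finset.mem_univ z0
    exact (Finset.mem_erase.mp this).1 rfl
  have hsat : StarSat 4 n ({Finset.univ, Finset.univ.erase z0} : Finset (Finset (Fin n))) := by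
    refine ⟨?_, ?_, ?_⟩
    · intro e he
      rcases Finset.mem_insert.mp he with rfl | he
      · rw [Finset.card_univ, Fintype.card_fin]; omega
      · rw [Finset.mem_singleton.mp he, Finset.card_erase_of_mem (Finset.mem_univ _),
          Finset.card_univ, Fintype.card_fin]; omega
    · intro h
      have h3 := card_ge_of_star h
      have : ({Finset.univ, Finset.univ.erase z0} : Finset (Finset (Fin n))).card ≤ 2 :=
        (Finset.card_insert_le _ _).trans (by simp)
      omega
    · intro e he hcard
      simp only [Finset.mem_insert, Finset.mem_singleton, not_or] at he
      obtain ⟨hne1, hne2⟩ := he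
      -- pick c ∈ e with c ≠ z0 and v1 ∈ e with v1 ≠ c
      obtain ⟨a, ha, b, hb, hab⟩ := Finset.one_lt_card.mp (by omega : 1 < e.card)
      obtain ⟨c, hce, hcz, v1, hv1e, hv1c⟩ :
          ∃ c, c ∈ e ∧ c ≠ z0 ∧ ∃ v1, v1 ∈ e ∧ v1 ≠ c := by
        by_cases h : a = z0
        · exact ⟨b, hb, fun hb0 => hab (h.trans hb0.symm), a, ha, hab⟩
        · exact ⟨a, ha, h, b, hb, fun h' => hab h'.symm⟩
      obtain ⟨v3, hv3c, hv3v1, hv3z⟩ := exists_notin hn c v1 z0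
      obtain ⟨v2, hv2c, hv2v1, hv2v3⟩ := exists_notin hn c v1 v3
      refine ⟨![e, Finset.univ, Finset.univ.erase z0], c, ![v1, v2, v3], ?_, ?_, ?_, ?_⟩
      · intro i j hij
        fin_cases i <;> fin_cases j <;> simp_all
      · intro i j hij
        fin_cases i <;> fin_cases j <;> simp_all
      · intro k
        fin_cases k <;> simp_all
      · intro k
        fin_cases k <;>
          simp_all [Finset.mem_insert, Finset.mem_erase]
  refine ⟨hsat, ⟨⟨_, hsat, ?_⟩, ?_⟩⟩
  · rw [Finset.card_insert_of_notMem (by simpa using huniv_ne), Finset.card_singleton]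
  · rintro m ⟨H, ⟨hH2, hHno, hHsat⟩, rfl⟩
    by_contra hlt
    push_neg at hlt
    have hH1 : H.card ≤ 1 := by omega
    set z1 : Fin n := ⟨1, by omega⟩ with hz1
    set z2 : Fin n := ⟨2, by omega⟩ with hz2
    have h01 : z0 ≠ z1 := by simp [hz0, hz1, Fin.ext_iff]
    have h02 : z0 ≠ z2 := by simp [hz0, hz2, Fin.ext_iff]
    have h12 : z1 ≠ z2 := by simp [hz1, hz2, Fin.ext_iff]
    have hepair : ∃ f : Finset (Fin n), f ∉ H ∧ f.card = 2 := by
      by_cases h1 : ({z0, z1} : Finset (Fin n)) ∈ H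
      · refine ⟨{z0, z2}, ?_, Finset.card_pair h02⟩
        intro h2
        have hsub : ({({z0, z1} : Finset (Fin n)), {z0, z2}} : Finset (Finset (Fin n))) ⊆ H := by
          intro x hx
          rcases Finset.mem_insert.mp hx with rfl | hx
          · exact h1
          · exact (Finset.mem_singleton.mp hx) ▸ h2
        have hne : ({z0, z1} : Finset (Fin n)) ≠ {z0, z2} := by
          intro h
          have : z1 ∈ ({z0, z2} : Finset (Fin n)) := h ▸ (by simp)
          simp only [Finset.mem_insert, Finset.mem_singleton] at this
          rcases this with h' | h'
          · exact h01 h'.symm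
          · exact h12 h'
        have := Finset.card_le_card hsub
        rw [Finset.card_insert_of_notMem (by simpa using hne), Finset.card_singleton] at this
        omega
      · exact ⟨{z0, z1}, h1, Finset.card_pair h01⟩
    obtain ⟨f, hfH, hf2⟩ := hepair
    have := card_ge_of_star (hHsat f hfH (by omega))
    have := Finset.card_insert_le f H
    omega
end

section
/- For n ≥ 3, the hypergraph ([n], {[n], [n]\{1}}) is Berge-K_3 saturated; hence sat(n, B(K_3)) = 2. -/
open Finset

/-- A hypergraph `H` on `[n]` contains a Berge-`K_3` subhypergraph: three distinct hyperedges
`E₁, E₂, E₃` and three distinct vertices `a, b, c` with `{a,b} ⊆ E₁`, `{b,c} ⊆ E₂`,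
`{a,c} ⊆ E₃`. -/
def HasBergeTriangle (n : ℕ) (H : Finset (Finset (Fin n))) : Prop :=
  ∃ E₁ E₂ E₃ : Finset (Fin n), ∃ a b c : Fin n,
    E₁ ∈ H ∧ E₂ ∈ H ∧ E₃ ∈ H ∧ E₁ ≠ E₂ ∧ E₂ ≠ E₃ ∧ E₁ ≠ E₃ ∧
    a ≠ b ∧ b ≠ c ∧ a ≠ c ∧
    a ∈ E₁ ∧ b ∈ E₁ ∧ b ∈ E₂ ∧ c ∈ E₂ ∧ a ∈ E₃ ∧ c ∈ E₃

/-- `H` is Berge-`K_3` saturated. -/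
def TriangleSat (n : ℕ) (H : Finset (Finset (Fin n))) : Prop :=
  (∀ e ∈ H, 2 ≤ e.card) ∧ ¬ HasBergeTriangle n H ∧
    ∀ e : Finset (Fin n), e ∉ H → 2 ≤ e.card → HasBergeTriangle n (insert e H)

lemma hbt_card {n : ℕ} {H : Finset (Finset (Fin n))} (h : HasBergeTriangle n H) :
    3 ≤ H.card := by
  obtain ⟨E₁, E₂, E₃, a, b, c, h1, h2, h3, h12, h23, h13, _⟩ := h
  have hsub : ({E₁, E₂, E₃} : Finset (Finset (Fin n))) ⊆ H := by
    intro x hx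
    simp only [mem_insert, mem_singleton] at hx
    rcases hx with rfl | rfl | rfl <;> assumption
  have hc : ({E₁, E₂, E₃} : Finset (Finset (Fin n))).card = 3 := by
    rw [card_insert_of_notMem (by simp [h12, h13]), card_pair h23]
  calc 3 = ({E₁, E₂, E₃} : Finset (Finset (Fin n))).card := hc.symm
    _ ≤ H.card := card_le_card hsub

/-- For `n ≥ 3`, the hypergraph `([n], {[n], [n] \ {1}})` is Berge-`K_3` saturated; hence
`sat(n, B(K_3)) = 2`. -/
theorem sat_K3 (n : ℕ) (hn : 3 ≤ n) :
    TriangleSat n ({Finset.univ, Finset.univ.erase ⟨0, by omega⟩} : Finset (Finset (Fin n))) ∧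
    IsLeast {m : ℕ | ∃ H : Finset (Finset (Fin n)), TriangleSat n H ∧ H.card = m} 2 := by
  set v0 : Fin n := ⟨0, by omega⟩ with hv0
  set v1 : Fin n := ⟨1, by omega⟩ with hv1
  set v2 : Fin n := ⟨2, by omega⟩ with hv2
  have h01 : v0 ≠ v1 := by simp [hv0, hv1, Fin.ext_iff]
  have h02 : v0 ≠ v2 := by simp [hv0, hv2, Fin.ext_iff]
  have h12 : v1 ≠ v2 := by simp [hv1, hv2, Fin.ext_iff]
  have hune : (univ : Finset (Fin n)) ≠ univ.erase v0 := by
    intro h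
    have := mem_univ v0
    rw [h] at this
    exact (notMem_erase v0 univ) this
  have hsat : TriangleSat n ({univ, univ.erase v0} : Finset (Finset (Fin n))) := by
    refine ⟨?_, ?_, ?_⟩
    · intro e he
      simp only [mem_insert, mem_singleton] at he
      rcases he with rfl | rfl
      · rw [card_univ, Fintype.card_fin]; omega
      · rw [card_erase_of_mem (mem_univ _), card_univ, Fintype.card_fin]; omega
    · intro h
      have := hbt_card h
      have hc : ({univ, univ.erase v0} : Finset (Finset (Fin n))).card = 2 :=
        card_pair hune
      omega
    · intro e he hcard
      simp only [mem_insert, mem_singleton, not_or] at he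
      obtain ⟨heu, hee⟩ := he
      by_cases hv : v0 ∈ e
      · -- pick c ∈ e with c ≠ v0, and a ∈ {v1, v2} with a ≠ c
        obtain ⟨x, hx, y, hy, hxy⟩ := one_lt_card.mp hcard
        have hcc : ∃ cc ∈ e, cc ≠ v0 := by
          rcases eq_or_ne x v0 with rfl | h
          · exact ⟨y, hy, fun h => hxy h.symm⟩
          · exact ⟨x, hx, h⟩
        obtain ⟨cc, hcce, hccv⟩ := hcc
        set a : Fin n := if cc = v1 then v2 else v1 with ha
        have ha0 : a ≠ v0 := by
          rw [ha]; split <;> [exact h02.symm; exact h01.symm]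
        have hac : a ≠ cc := by
          rw [ha]; split
          · rename_i h; rw [h]; exact h12.symm
          · rename_i h; exact fun hh => h hh.symm
        refine ⟨univ, e, univ.erase v0, a, v0, cc, by simp, by simp, by simp,
          fun h => heu h.symm, hee, hune, ha0, fun h => hccv h.symm, hac,
          mem_univ a, mem_univ v0, hv, hcce, mem_erase.mpr ⟨ha0, mem_univ a⟩,
          mem_erase.mpr ⟨hccv, mem_univ cc⟩⟩
      · -- e ⊂ erase v0; pick z ∈ erase v0 \ e
        obtain ⟨x, hx, y, hy, hxy⟩ := one_lt_card.mp hcard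
        have hsub : e ⊆ univ.erase v0 := fun z hz =>
          mem_erase.mpr ⟨fun h => hv (h ▸ hz), mem_univ z⟩
        have hss : e ⊂ univ.erase v0 := ⟨hsub, fun h => hee (le_antisymm hsub h)⟩
        obtain ⟨z, hz, hze⟩ := exists_of_ssubset hss
        have hz0 : z ≠ v0 := (mem_erase.mp hz).1
        have hx0 : x ≠ v0 := fun h => hv (h ▸ hx)
        have hy0 : y ≠ v0 := fun h => hv (h ▸ hy)
        refine ⟨univ, e, univ.erase v0, z, x, y, by simp, by simp, by simp,
          fun h => heu h.symm, hee, hune,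
          fun h => hze (h ▸ hx), hxy, fun h => hze (h ▸ hy),
          mem_univ z, mem_univ x, hx, hy,
          mem_erase.mpr ⟨hz0, mem_univ z⟩, mem_erase.mpr ⟨hy0, mem_univ y⟩⟩
  refine ⟨hsat, ⟨⟨_, hsat, card_pair hune⟩, ?_⟩⟩
  rintro m ⟨H, ⟨_, _, hadd⟩, rfl⟩
  by_contra hlt
  push_neg at hlt
  interval_cases hm : H.card
  · have h2 : ({v0, v1} : Finset (Fin n)).card = 2 := card_pair h01
    have := hadd {v0, v1} (by rw [card_eq_zero.mp hm]; simp) (le_of_eq h2.symm)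
    have hc := hbt_card this
    have : (insert ({v0, v1} : Finset (Fin n)) H).card ≤ H.card + 1 := card_insert_le _ _
    omega
  · -- H = {E}; one of {v0,v1}, {v0,v2} is not in H
    have hne : ({v0, v1} : Finset (Fin n)) ≠ ({v0, v2} : Finset (Fin n)) := by
      intro h
      have : v1 ∈ ({v0, v2} : Finset (Fin n)) := h ▸ (by simp)
      simp only [mem_insert, mem_singleton] at this
      rcases this with h' | h' <;> [exact h01 h'.symm; exact h12 h']
    obtain ⟨E, hE⟩ := card_eq_one.mp hm
    have : ({v0, v1} : Finset (Fin n)) ∉ H ∨ ({v0, v2} : Finset (Fin n)) ∉ H := by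
      by_contra h
      push_neg at h
      have h1 := h.1; have h2 := h.2
      rw [hE, mem_singleton] at h1 h2
      exact hne (h1.trans h2.symm)
    rcases this with h | h
    · have := hadd {v0, v1} h (le_of_eq (card_pair h01).symm)
      have hc := hbt_card this
      have : (insert ({v0, v1} : Finset (Fin n)) H).card ≤ H.card + 1 := card_insert_le _ _
      omega
    · have := hadd {v0, v2} h (le_of_eq (card_pair h02).symm)
      have hc := hbt_card this
      have : (insert ({v0, v2} : Finset (Fin n)) H).card ≤ H.card + 1 := card_insert_le _ _
      omega
end

section
/- If a graph G on n ≥ 3 vertices has two distinct vertex covers each of size 2, then G is a subgraph of a 4-cycle, or a subgraph of a triangle together with additional edges all incident to one fixed vertex of the triangle; in either case |E(G)| ≤ n. -/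
open Finset

lemma aux_tri {V : Type*} (G : SimpleGraph V) (a b c : V) (hbc : b ≠ c)
    (hcov₁ : ∀ e ∈ G.edgeSet, a ∈ e ∨ b ∈ e)
    (hcov₂ : ∀ e ∈ G.edgeSet, a ∈ e ∨ c ∈ e) :
    ∀ e ∈ G.edgeSet, e ∈ ({s(a, b), s(b, c), s(a, c)} : Set (Sym2 V)) ∨ a ∈ e := by
  intro e he
  rcases hcov₁ e he with ha | hb
  · exact Or.inr ha
  rcases hcov₂ e he with ha | hc
  · exact Or.inr ha
  · left
    have : e = s(b, c) := ((Sym2.mem_and_mem_iff hbc).mp ⟨hb, hc⟩)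
    simp [this]

lemma aux_cyc {V : Type*} (G : SimpleGraph V) (a b c d : V)
    (hab : a ≠ b) (had : a ≠ d) (hcb : c ≠ b) (hcd : c ≠ d)
    (hcov₁ : ∀ e ∈ G.edgeSet, a ∈ e ∨ c ∈ e)
    (hcov₂ : ∀ e ∈ G.edgeSet, b ∈ e ∨ d ∈ e) :
    ∀ e ∈ G.edgeSet, e ∈ ({s(a, b), s(b, c), s(c, d), s(d, a)} : Set (Sym2 V)) := by
  intro e he
  rcases hcov₁ e he with h1 | h1 <;> rcases hcov₂ e he with h2 | h2
  · have : e = s(a, b) := (Sym2.mem_and_mem_iff hab).mp ⟨h1, h2⟩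
    simp [this]
  · have : e = s(a, d) := (Sym2.mem_and_mem_iff had).mp ⟨h1, h2⟩
    simp [this, Sym2.eq_swap]
  · have : e = s(c, b) := (Sym2.mem_and_mem_iff hcb).mp ⟨h1, h2⟩
    simp [this, Sym2.eq_swap]
  · have : e = s(c, d) := (Sym2.mem_and_mem_iff hcd).mp ⟨h1, h2⟩
    simp [this]

lemma count_tri {V : Type*} [Fintype V] [DecidableEq V] (G : SimpleGraph V)
    [DecidableRel G.Adj] (a b c : V)
    (h : ∀ e ∈ G.edgeSet, e ∈ ({s(a, b), s(b, c), s(a, c)} : Set (Sym2 V)) ∨ a ∈ e) :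
    G.edgeFinset.card ≤ Fintype.card V := by
  have hsub : G.edgeFinset ⊆ insert (s(b, c)) (G.incidenceFinset a) := by
    intro e he
    have he' : e ∈ G.edgeSet := SimpleGraph.mem_edgeFinset.mp he
    by_cases ha : a ∈ e
    · exact Finset.mem_insert_of_mem ((SimpleGraph.mem_incidenceFinset G a e).mpr ⟨he', ha⟩)
    · rcases h e he' with h3 | h3
      · simp only [Set.mem_insert_iff, Set.mem_singleton_iff] at h3
        rcases h3 with rfl | rfl | rfl
        · exact absurd (Sym2.mem_mk_left a b) ha
        · exact Finset.mem_insert_self _ _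
        · exact absurd (Sym2.mem_mk_left a c) ha
      · exact absurd h3 ha
  calc G.edgeFinset.card ≤ (insert (s(b, c)) (G.incidenceFinset a)).card :=
        Finset.card_le_card hsub
    _ ≤ (G.incidenceFinset a).card + 1 := Finset.card_insert_le _ _
    _ = G.degree a + 1 := by rw [G.card_incidenceFinset_eq_degree]
    _ ≤ Fintype.card V := by
        have := G.degree_lt_card_verts a
        omega

lemma count_cyc {V : Type*} [Fintype V] [DecidableEq V] (G : SimpleGraph V)
    [DecidableRel G.Adj] (a b c d : V)
    (h : ∀ e ∈ G.edgeSet, e ∈ ({s(a, b), s(b, c), s(c, d), s(d, a)} : Set (Sym2 V))) :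
    G.edgeFinset.card ≤ 4 := by
  have hsub : G.edgeFinset ⊆ ({s(a, b), s(b, c), s(c, d), s(d, a)} : Finset (Sym2 V)) := by
    intro e he
    have := h e (SimpleGraph.mem_edgeFinset.mp he)
    simp only [Set.mem_insert_iff, Set.mem_singleton_iff] at this
    simp [this]
  calc G.edgeFinset.card ≤ _ := Finset.card_le_card hsub
    _ ≤ 4 := by
      apply le_trans (Finset.card_insert_le _ _)
      apply Nat.succ_le_succ
      apply le_trans (Finset.card_insert_le _ _)
      apply Nat.succ_le_succ
      apply le_trans (Finset.card_insert_le _ _)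
      simp

/-- If a graph `G` on `n ≥ 3` vertices has two distinct vertex covers each of size 2, then `G`
is a subgraph of a 4-cycle, or a subgraph of a triangle together with additional edges all
incident to one fixed vertex of the triangle; in either case `|E(G)| ≤ n`. -/
theorem two_distinct_covers {V : Type*} [Fintype V] [DecidableEq V] (G : SimpleGraph V)
    [DecidableRel G.Adj] (n : ℕ) (hcard : Fintype.card V = n) (hn : 3 ≤ n)
    (C₁ C₂ : Finset V) (hne : C₁ ≠ C₂) (h₁ : C₁.card = 2) (h₂ : C₂.card = 2)
    (hcov₁ : ∀ e ∈ G.edgeSet, ∃ v ∈ C₁, v ∈ e) (hcov₂ : ∀ e ∈ G.edgeSet, ∃ v ∈ C₂, v ∈ e) :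
    ((∃ a b c d : V, List.Pairwise (· ≠ ·) [a, b, c, d] ∧
        ∀ e ∈ G.edgeSet, e ∈ ({s(a, b), s(b, c), s(c, d), s(d, a)} : Set (Sym2 V))) ∨
      (∃ a b c : V, a ≠ b ∧ b ≠ c ∧ a ≠ c ∧
        ∀ e ∈ G.edgeSet, e ∈ ({s(a, b), s(b, c), s(a, c)} : Set (Sym2 V)) ∨ a ∈ e)) ∧
    G.edgeFinset.card ≤ n := by
  obtain ⟨p, q, hpq, rfl⟩ := Finset.card_eq_two.mp h₁
  obtain ⟨r, s, hrs, rfl⟩ := Finset.card_eq_two.mp h₂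
  have cov₁ : ∀ e ∈ G.edgeSet, p ∈ e ∨ q ∈ e := by
    intro e he
    obtain ⟨v, hv, hve⟩ := hcov₁ e he
    simp only [Finset.mem_insert, Finset.mem_singleton] at hv
    rcases hv with rfl | rfl
    · exact Or.inl hve
    · exact Or.inr hve
  have cov₂ : ∀ e ∈ G.edgeSet, r ∈ e ∨ s ∈ e := by
    intro e he
    obtain ⟨v, hv, hve⟩ := hcov₂ e he
    simp only [Finset.mem_insert, Finset.mem_singleton] at hv
    rcases hv with rfl | rfl
    · exact Or.inl hve
    · exact Or.inr hve
  by_cases hpr : p = r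
  · -- shared vertex p = r
    subst hpr
    have hqs : q ≠ s := fun h => hne (by subst h; rfl)
    have key := aux_tri G p q s hqs cov₁ cov₂
    exact ⟨Or.inr ⟨p, q, s, hpq, hqs, hrs, key⟩, hcard ▸ count_tri G p q s key⟩
  · by_cases hps : p = s
    · subst hps
      have hqr : q ≠ r := fun h => hne (by subst h; rw [Finset.pair_comm])
      have cov₂' : ∀ e ∈ G.edgeSet, p ∈ e ∨ r ∈ e := fun e he => (cov₂ e he).symm
      have key := aux_tri G p q r hqr cov₁ cov₂'
      exact ⟨Or.inr ⟨p, q, r, hpq, hqr, fun h => hrs h.symm, key⟩,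
        hcard ▸ count_tri G p q r key⟩
    · by_cases hqr : q = r
      · subst hqr
        have cov₁' : ∀ e ∈ G.edgeSet, q ∈ e ∨ p ∈ e := fun e he => (cov₁ e he).symm
        have key := aux_tri G q p s (fun h => hps h) cov₁' cov₂
        exact ⟨Or.inr ⟨q, p, s, fun h => hpq h.symm, fun h => hps h, hrs, key⟩,
          hcard ▸ count_tri G q p s key⟩
      · by_cases hqs : q = s
        · subst hqs
          have cov₁' : ∀ e ∈ G.edgeSet, q ∈ e ∨ p ∈ e := fun e he => (cov₁ e he).symm
          have cov₂' : ∀ e ∈ G.edgeSet, q ∈ e ∨ r ∈ e := fun e he => (cov₂ e he).symm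
          have key := aux_tri G q p r (fun h => hpr h) cov₁' cov₂'
          exact ⟨Or.inr ⟨q, p, r, fun h => hpq h.symm, fun h => hpr h,
            fun h => hrs h.symm, key⟩, hcard ▸ count_tri G q p r key⟩
        · -- all four distinct: 4-cycle p r q s
          have key := aux_cyc G p r q s hpr hps (fun h => hqr h)
            (fun h => hqs h) cov₁ cov₂
          have hcard4 : ({p, r, q, s} : Finset V).card = 4 := by
            rw [Finset.card_insert_of_notMem (by simp [hpr, hpq, hps]),
              Finset.card_insert_of_notMem (by simp [Ne.symm hqr, hrs]),
              Finset.card_insert_of_notMem (by simp [hqs]), Finset.card_singleton]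
          have h4n : 4 ≤ n := by
            rw [← hcard, ← hcard4]
            exact Finset.card_le_univ _
          refine ⟨Or.inl ⟨p, r, q, s, ?_, key⟩, le_trans (count_cyc G p r q s key) h4n⟩
          simp [hpr, hpq, hps, hqr, hqs, hrs, ne_comm]
end
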